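/- Let n and m be positive integers, let A be an invertible n×n real matrix, let D be an n×n real matrix, let b ∈ ℝⁿ, and let ε be a real number with m · |ε| · ‖A⁻¹ * D‖ < 1, where ‖·‖ is the operator norm induced by the Euclidean vector norm. For each integer α with 1 ≤ α ≤ m define x̂_α := (1/2)((A + (α·ε) • D)⁻¹ b + (A − (α·ε) • D)⁻¹ b), let Γ_m be the m×m matrix with entries (Γ_m)_{α,j} = α^{2j} (α = 1,…,m; j = 0,…,m−1), and let β := (Γ_mᵀ)⁻¹ e₁ with e₁ = (1,0,…,0)ᵀ. Then the approximation x̂* := Σ_{α=1}^m β_α x̂_α satisfies ‖x̂* − A⁻¹ b‖ ≤ (Σ_{α=1}^m |β_α|) · (m |ε| ‖A⁻¹ * D‖)^{2m} / (1 − (m |ε| ‖A⁻¹ * D‖)²) · ‖A⁻¹‖ · ‖b‖. -/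

import Mathlib

open Matrix
open scoped Matrix.Norms.L2Operator

/-- Matrix-vector product, with the vector living in Euclidean space (so that vector
norms are the Euclidean ones). -/
noncomputable def mulVecE {n : ℕ} (M : Matrix (Fin n) (Fin n) ℝ)
    (v : EuclideanSpace ℝ (Fin n)) : EuclideanSpace ℝ (Fin n) :=
  (WithLp.equiv 2 (Fin n → ℝ)).symm (M.mulVec ((WithLp.equiv 2 (Fin n → ℝ)) v))

/-- The averaged perturbation solution
`x̂_α = (1/2)((A + (α ε) • D)⁻¹ b + (A - (α ε) • D)⁻¹ b)`. -/
noncomputable def xhat {n : ℕ} (A D : Matrix (Fin n) (Fin n) ℝ)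
    (b : EuclideanSpace ℝ (Fin n)) (ε α : ℝ) : EuclideanSpace ℝ (Fin n) :=
  (1 / 2 : ℝ) • (mulVecE (A + (α * ε) • D)⁻¹ b + mulVecE (A - (α * ε) • D)⁻¹ b)

open Finset

namespace Aux

variable {n : ℕ}

lemma mulVecE_add (X Y : Matrix (Fin n) (Fin n) ℝ) (v : EuclideanSpace ℝ (Fin n)) :
    mulVecE (X + Y) v = mulVecE X v + mulVecE Y v := by
  simp [mulVecE, Matrix.add_mulVec]

lemma mulVecE_smul (c : ℝ) (X : Matrix (Fin n) (Fin n) ℝ) (v : EuclideanSpace ℝ (Fin n)) :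
    mulVecE (c • X) v = c • mulVecE X v := by
  simp [mulVecE, Matrix.smul_mulVec]

lemma mulVecE_zero (v : EuclideanSpace ℝ (Fin n)) :
    mulVecE (0 : Matrix (Fin n) (Fin n) ℝ) v = 0 := by
  simp [mulVecE]

lemma mulVecE_sum {ι : Type*} (s : Finset ι) (F : ι → Matrix (Fin n) (Fin n) ℝ)
    (v : EuclideanSpace ℝ (Fin n)) :
    mulVecE (∑ i ∈ s, F i) v = ∑ i ∈ s, mulVecE (F i) v := by
  classical
  induction s using Finset.induction_on with
  | empty => simp [mulVecE_zero]
  | insert _ _ h ih => rw [Finset.sum_insert h, Finset.sum_insert h, mulVecE_add, ih]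

lemma norm_mulVecE_le (X : Matrix (Fin n) (Fin n) ℝ) (v : EuclideanSpace ℝ (Fin n)) :
    ‖mulVecE X v‖ ≤ ‖X‖ * ‖v‖ :=
  X.l2_opNorm_mulVec v

lemma norm_one_le : ‖(1 : Matrix (Fin n) (Fin n) ℝ)‖ ≤ 1 := by
  rw [Matrix.cstar_norm_def, _root_.map_one, ContinuousLinearMap.one_def]
  exact ContinuousLinearMap.norm_id_le

lemma isUnit_one_sub (x : Matrix (Fin n) (Fin n) ℝ) (hx : ‖x‖ < 1) : IsUnit (1 - x) := by
  haveI : CompleteSpace (Matrix (Fin n) (Fin n) ℝ) := FiniteDimensional.complete ℝ _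
  exact (Units.oneSub x hx).isUnit

lemma norm_inv_one_sub_le (x : Matrix (Fin n) (Fin n) ℝ) (hx : ‖x‖ < 1) :
    ‖(1 - x)⁻¹‖ ≤ (1 - ‖x‖)⁻¹ := by
  have hu := isUnit_one_sub x hx
  have hdet := (Matrix.isUnit_iff_isUnit_det _).mp hu
  have hmul : (1 - x) * (1 - x)⁻¹ = 1 := Matrix.mul_nonsing_inv _ hdet
  have hid : (1 - x)⁻¹ = 1 + x * (1 - x)⁻¹ := by
    have h := hmul
    rw [sub_mul, one_mul, sub_eq_iff_eq_add] at h
    exact h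
  have hn : ‖(1 - x)⁻¹‖ ≤ 1 + ‖x‖ * ‖(1 - x)⁻¹‖ := by
    calc ‖(1 - x)⁻¹‖ = ‖1 + x * (1 - x)⁻¹‖ := by rw [← hid]
      _ ≤ ‖(1 : Matrix (Fin n) (Fin n) ℝ)‖ + ‖x * (1 - x)⁻¹‖ := norm_add_le _ _
      _ ≤ 1 + ‖x‖ * ‖(1 - x)⁻¹‖ := by
          gcongr
          · exact norm_one_le
          · exact norm_mul_le _ _
  have h2 : (0:ℝ) < 1 - ‖x‖ := by linarith
  rw [show (1 - ‖x‖)⁻¹ = 1 / (1 - ‖x‖) from (one_div _).symm, le_div_iff₀ h2]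
  nlinarith [norm_nonneg ((1 - x)⁻¹)]

lemma half_sum_inv (x : Matrix (Fin n) (Fin n) ℝ) (hx : ‖x‖ < 1) :
    (1 - x ^ 2)⁻¹ = (1 / 2 : ℝ) • ((1 + x)⁻¹ + (1 - x)⁻¹) := by
  have hu1 : IsUnit (1 - x) := isUnit_one_sub x hx
  have hu2 : IsUnit (1 + x) := by
    have := isUnit_one_sub (-x) (by rwa [norm_neg])
    rwa [sub_neg_eq_add] at this
  have hdet1 := (Matrix.isUnit_iff_isUnit_det _).mp hu1
  have hdet2 := (Matrix.isUnit_iff_isUnit_det _).mp hu2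
  have hf1 : (1 : Matrix (Fin n) (Fin n) ℝ) - x ^ 2 = (1 + x) * (1 - x) := by noncomm_ring
  have hf2 : (1 : Matrix (Fin n) (Fin n) ℝ) - x ^ 2 = (1 - x) * (1 + x) := by noncomm_ring
  have hP : (1 + x)⁻¹ * (1 - x ^ 2) = 1 - x := by
    rw [hf1, ← Matrix.mul_assoc, Matrix.nonsing_inv_mul _ hdet2, one_mul]
  have hQ : (1 - x)⁻¹ * (1 - x ^ 2) = 1 + x := by
    rw [hf2, ← Matrix.mul_assoc, Matrix.nonsing_inv_mul _ hdet1, one_mul]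
  have key : ((1 / 2 : ℝ) • ((1 + x)⁻¹ + (1 - x)⁻¹)) * (1 - x ^ 2) = 1 := by
    rw [smul_mul_assoc, add_mul, hP, hQ]
    have h2 : (1 - x) + (1 + x) = (2 : ℝ) • (1 : Matrix (Fin n) (Fin n) ℝ) := by
      rw [two_smul]; abel
    rw [h2, smul_smul]; norm_num
  exact Matrix.inv_eq_left_inv key

lemma geom_inv (y : Matrix (Fin n) (Fin n) ℝ) (hu : IsUnit (1 - y)) (m : ℕ) :
    (1 - y)⁻¹ = (∑ k ∈ Finset.range m, y ^ k) + y ^ m * (1 - y)⁻¹ := by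
  have hdet := (Matrix.isUnit_iff_isUnit_det _).mp hu
  have hmul : (1 - y) * (1 - y)⁻¹ = 1 := Matrix.mul_nonsing_inv _ hdet
  have hg : (∑ k ∈ Finset.range m, y ^ k) * (1 - y) = 1 - y ^ m := by
    have h := geom_sum_mul y m
    have h2 : (∑ k ∈ Finset.range m, y ^ k) * (1 - y)
        = -((∑ k ∈ Finset.range m, y ^ k) * (y - 1)) := by
      rw [← mul_neg, neg_sub]
    rw [h2, h, neg_sub]
  calc (1 - y)⁻¹ = ((1 - y ^ m) + y ^ m) * (1 - y)⁻¹ := by rw [sub_add_cancel, one_mul]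
    _ = (∑ k ∈ Finset.range m, y ^ k) * ((1 - y) * (1 - y)⁻¹) + y ^ m * (1 - y)⁻¹ := by
        rw [add_mul, ← hg, Matrix.mul_assoc]
    _ = (∑ k ∈ Finset.range m, y ^ k) + y ^ m * (1 - y)⁻¹ := by rw [hmul, mul_one]

lemma beta_sum {m : ℕ} (β : Fin m → ℝ)
    (hβ : β = ((Matrix.of fun α j : Fin m => (((α : ℕ) + 1 : ℝ)) ^ (2 * (j : ℕ)))ᵀ)⁻¹.mulVec
        (fun i : Fin m => if (i : ℕ) = 0 then (1 : ℝ) else 0)) :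
    ∀ j : Fin m, ∑ α : Fin m, β α * (((α : ℕ) + 1 : ℝ)) ^ (2 * (j : ℕ))
      = if (j : ℕ) = 0 then 1 else 0 := by
  set Γ : Matrix (Fin m) (Fin m) ℝ :=
    Matrix.of fun α j : Fin m => (((α : ℕ) + 1 : ℝ)) ^ (2 * (j : ℕ)) with hΓ
  have hvand : Γ = Matrix.vandermonde (fun α : Fin m => (((α : ℕ) + 1 : ℝ)) ^ 2) := by
    ext α j
    simp [hΓ, Matrix.vandermonde, pow_mul]
  have hdet : IsUnit Γ.det := by
    rw [hvand, isUnit_iff_ne_zero, Matrix.det_vandermonde_ne_zero_iff]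
    intro a b hab
    simp only at hab
    have hab' : ((a : ℕ) + 1) ^ 2 = ((b : ℕ) + 1) ^ 2 := by exact_mod_cast hab
    have := Nat.pow_left_injective (by norm_num) hab'
    exact Fin.ext (Nat.succ_injective this)
  have hdetT : IsUnit (Γᵀ).det := by rwa [Matrix.det_transpose]
  have he : Γᵀ.mulVec β = fun i : Fin m => if (i : ℕ) = 0 then (1 : ℝ) else 0 := by
    rw [hβ, Matrix.mulVec_mulVec, Matrix.mul_nonsing_inv _ hdetT, Matrix.one_mulVec]
  intro j
  have h := congrFun he j
  simpa [Matrix.mulVec, dotProduct, Matrix.transpose_apply, hΓ, mul_comm] using h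

lemma xhat_eq (A D : Matrix (Fin n) (Fin n) ℝ) (hA : IsUnit A)
    (b : EuclideanSpace ℝ (Fin n)) (ε a : ℝ) (h : ‖(a * ε) • (A⁻¹ * D)‖ < 1) :
    xhat A D b ε a = mulVecE ((1 - ((a * ε) • (A⁻¹ * D)) ^ 2)⁻¹ * A⁻¹) b := by
  have hdetA := (Matrix.isUnit_iff_isUnit_det _).mp hA
  have hu1 : IsUnit (1 - (a * ε) • (A⁻¹ * D)) := isUnit_one_sub _ h
  have hplus : A + (a * ε) • D = A * (1 + (a * ε) • (A⁻¹ * D)) := by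
    rw [mul_add, mul_one, mul_smul_comm, ← Matrix.mul_assoc,
      Matrix.mul_nonsing_inv _ hdetA, one_mul]
  have hminus : A - (a * ε) • D = A * (1 - (a * ε) • (A⁻¹ * D)) := by
    rw [mul_sub, mul_one, mul_smul_comm, ← Matrix.mul_assoc,
      Matrix.mul_nonsing_inv _ hdetA, one_mul]
  have hip : (A + (a * ε) • D)⁻¹ = (1 + (a * ε) • (A⁻¹ * D))⁻¹ * A⁻¹ := by
    rw [hplus, Matrix.mul_inv_rev]
  have him : (A - (a * ε) • D)⁻¹ = (1 - (a * ε) • (A⁻¹ * D))⁻¹ * A⁻¹ := by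
    rw [hminus, Matrix.mul_inv_rev]
  rw [xhat, hip, him, ← mulVecE_add, ← Matrix.add_mul, ← mulVecE_smul, ← smul_mul_assoc,
    ← half_sum_inv _ h]

end Aux

open Aux in
/-- Explicit error bound for the optimal approximation `x̂* = ∑_α β_α x̂_α` with
`β = (Γ_mᵀ)⁻¹ e₁`:
`‖x̂* - A⁻¹ b‖ ≤ (∑_α |β_α|) (m |ε| ‖A⁻¹ D‖)^(2m) / (1 - (m |ε| ‖A⁻¹ D‖)²) ‖A⁻¹‖ ‖b‖`. -/
theorem optimal_approximation_error_bound (n m : ℕ) (hn : 0 < n) (hm : 0 < m)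
    (A D : Matrix (Fin n) (Fin n) ℝ) (hA : IsUnit A) (b : EuclideanSpace ℝ (Fin n))
    (ε : ℝ) (hε : (m : ℝ) * |ε| * ‖A⁻¹ * D‖ < 1) (β : Fin m → ℝ)
    (hβ : β = ((Matrix.of fun α j : Fin m => (((α : ℕ) + 1 : ℝ)) ^ (2 * (j : ℕ)))ᵀ)⁻¹.mulVec
        (fun i : Fin m => if (i : ℕ) = 0 then (1 : ℝ) else 0)) :
    ‖(∑ α : Fin m, β α • xhat A D b ε ((α : ℕ) + 1)) - mulVecE A⁻¹ b‖
      ≤ (∑ α : Fin m, |β α|) * ((m : ℝ) * |ε| * ‖A⁻¹ * D‖) ^ (2 * m)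
          / (1 - ((m : ℝ) * |ε| * ‖A⁻¹ * D‖) ^ 2) * ‖A⁻¹‖ * ‖b‖ := by
  classical
  set M : Matrix (Fin n) (Fin n) ℝ := A⁻¹ * D with hM
  set r : ℝ := (m : ℝ) * |ε| * ‖M‖ with hrdef
  have hr0 : (0:ℝ) ≤ r := by positivity
  have hr1 : r < 1 := hε
  -- abbreviations
  set x : Fin m → Matrix (Fin n) (Fin n) ℝ :=
    fun α => ((((α : ℕ) : ℝ) + 1) * ε) • M with hxdef
  have hxr : ∀ α : Fin m, ‖x α‖ ≤ r := by
    intro α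
    rw [hxdef]
    simp only
    rw [norm_smul, Real.norm_eq_abs, abs_mul, abs_of_pos (show (0:ℝ) < ((α : ℕ) : ℝ) + 1 by positivity)]
    have hα : (((α : ℕ) : ℝ) + 1) ≤ (m : ℝ) := by exact_mod_cast α.isLt
    rw [hrdef, mul_assoc, mul_assoc]
    gcongr
  have hx1 : ∀ α : Fin m, ‖x α‖ < 1 := fun α => lt_of_le_of_lt (hxr α) hr1
  have hx2 : ∀ α : Fin m, ‖(x α) ^ 2‖ ≤ r ^ 2 := by
    intro α
    calc ‖(x α) ^ 2‖ = ‖x α * x α‖ := by rw [sq]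
      _ ≤ ‖x α‖ * ‖x α‖ := norm_mul_le _ _
      _ ≤ r * r := mul_le_mul (hxr α) (hxr α) (norm_nonneg _) hr0
      _ = r ^ 2 := (sq r).symm
  have hr2 : r ^ 2 < 1 := by nlinarith
  have hx2lt : ∀ α : Fin m, ‖(x α) ^ 2‖ < 1 := fun α => lt_of_le_of_lt (hx2 α) hr2
  set W : Fin m → Matrix (Fin n) (Fin n) ℝ := fun α => (1 - (x α) ^ 2)⁻¹ with hWdef
  -- rewrite each xhat
  have hxhat : ∀ α : Fin m, xhat A D b ε (((α : ℕ) : ℝ) + 1) = mulVecE (W α * A⁻¹) b := by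
    intro α
    exact xhat_eq A D hA b ε (((α : ℕ) : ℝ) + 1) (hx1 α)
  -- the sum as a single matrix
  have hsum : (∑ α : Fin m, β α • xhat A D b ε (((α : ℕ) : ℝ) + 1))
      = mulVecE ((∑ α : Fin m, β α • W α) * A⁻¹) b := by
    rw [Finset.sum_mul, mulVecE_sum]
    refine Finset.sum_congr rfl fun α _ => ?_
    rw [hxhat α, smul_mul_assoc, mulVecE_smul]
  -- the key algebraic identity ∑ β α • W α = 1 + E
  set E : Matrix (Fin n) (Fin n) ℝ := ∑ α : Fin m, β α • ((x α) ^ (2 * m) * W α) with hEdef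
  have hβs := beta_sum β hβ
  have hfirst : (∑ α : Fin m, β α • (∑ k ∈ Finset.range m, ((x α) ^ 2) ^ k)) = 1 := by
    have hinner : ∀ α : Fin m, (∑ k ∈ Finset.range m, ((x α) ^ 2) ^ k)
        = ∑ j : Fin m, ((((α : ℕ) : ℝ) + 1) ^ (2 * (j : ℕ)))
            • ((ε ^ (2 * (j : ℕ))) • M ^ (2 * (j : ℕ))) := by
      intro α
      rw [← Fin.sum_univ_eq_sum_range (fun k => ((x α) ^ 2) ^ k) m]
      refine Finset.sum_congr rfl fun j _ => ?_
      rw [hxdef]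
      simp only
      rw [← pow_mul, smul_pow, mul_pow, mul_smul]
    calc (∑ α : Fin m, β α • (∑ k ∈ Finset.range m, ((x α) ^ 2) ^ k))
        = ∑ α : Fin m, ∑ j : Fin m,
            (β α * (((α : ℕ) : ℝ) + 1) ^ (2 * (j : ℕ)))
              • ((ε ^ (2 * (j : ℕ))) • M ^ (2 * (j : ℕ))) := by
          refine Finset.sum_congr rfl fun α _ => ?_
          rw [hinner α, Finset.smul_sum]
          refine Finset.sum_congr rfl fun j _ => ?_
          rw [smul_smul]
      _ = ∑ j : Fin m, (∑ α : Fin m, β α * (((α : ℕ) : ℝ) + 1) ^ (2 * (j : ℕ)))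
              • ((ε ^ (2 * (j : ℕ))) • M ^ (2 * (j : ℕ))) := by
          rw [Finset.sum_comm]
          refine Finset.sum_congr rfl fun j _ => ?_
          rw [Finset.sum_smul]
      _ = ∑ j : Fin m, (if (j : ℕ) = 0 then (1:ℝ) else 0)
              • ((ε ^ (2 * (j : ℕ))) • M ^ (2 * (j : ℕ))) := by
          refine Finset.sum_congr rfl fun j _ => ?_
          rw [hβs j]
      _ = ∑ j : Fin m, (if j = (⟨0, hm⟩ : Fin m)
              then ((ε ^ (2 * (j : ℕ))) • M ^ (2 * (j : ℕ))) else 0) := by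
          refine Finset.sum_congr rfl fun j _ => ?_
          rw [ite_smul, one_smul, zero_smul]
          congr 1
          simp [Fin.ext_iff]
      _ = 1 := by
          rw [Finset.sum_ite_eq' Finset.univ (⟨0, hm⟩ : Fin m)]
          simp
  have hG : (∑ α : Fin m, β α • W α) = 1 + E := by
    have hgeom : ∀ α : Fin m, W α = (∑ k ∈ Finset.range m, ((x α) ^ 2) ^ k)
        + (x α) ^ (2 * m) * W α := by
      intro α
      rw [hWdef]
      simp only
      rw [show (x α) ^ (2 * m) = ((x α) ^ 2) ^ m from pow_mul _ 2 m]
      exact geom_inv ((x α) ^ 2) (isUnit_one_sub _ (hx2lt α)) m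
    calc (∑ α : Fin m, β α • W α)
        = ∑ α : Fin m, (β α • (∑ k ∈ Finset.range m, ((x α) ^ 2) ^ k)
            + β α • ((x α) ^ (2 * m) * W α)) := by
          refine Finset.sum_congr rfl fun α _ => ?_
          rw [← smul_add, ← hgeom α]
      _ = 1 + E := by
          rw [Finset.sum_add_distrib, hfirst, hEdef]
  -- rewrite the error vector
  have hvec : (∑ α : Fin m, β α • xhat A D b ε (((α : ℕ) : ℝ) + 1)) - mulVecE A⁻¹ b
      = mulVecE (E * A⁻¹) b := by
    rw [hsum, hG, add_mul, one_mul, mulVecE_add, add_sub_cancel_left]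
  -- norm estimates
  have hEnorm : ‖E‖ ≤ (∑ α : Fin m, |β α|) * (r ^ (2 * m) / (1 - r ^ 2)) := by
    rw [hEdef, Finset.sum_mul]
    refine le_trans (norm_sum_le _ _) (Finset.sum_le_sum fun α _ => ?_)
    rw [norm_smul, Real.norm_eq_abs]
    gcongr ?_ * ?_
    calc ‖(x α) ^ (2 * m) * W α‖ ≤ ‖(x α) ^ (2 * m)‖ * ‖W α‖ := norm_mul_le _ _
      _ ≤ ‖x α‖ ^ (2 * m) * (1 - ‖(x α) ^ 2‖)⁻¹ := by
          have h1 : ‖(x α) ^ (2 * m)‖ ≤ ‖x α‖ ^ (2 * m) :=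
            norm_pow_le' _ (by positivity)
          have h2 : ‖W α‖ ≤ (1 - ‖(x α) ^ 2‖)⁻¹ := norm_inv_one_sub_le _ (hx2lt α)
          exact mul_le_mul h1 h2 (norm_nonneg _) (by positivity)
      _ ≤ r ^ (2 * m) * (1 - r ^ 2)⁻¹ := by
          have h3 : ‖x α‖ ^ (2 * m) ≤ r ^ (2 * m) :=
            pow_le_pow_left₀ (norm_nonneg _) (hxr α) _
          have h4 : (1 - ‖(x α) ^ 2‖)⁻¹ ≤ (1 - r ^ 2)⁻¹ := by
            apply inv_anti₀ (by linarith)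
            linarith [hx2 α]
          exact mul_le_mul h3 h4 (inv_nonneg.mpr (by linarith [hx2lt α])) (by positivity)
      _ = r ^ (2 * m) / (1 - r ^ 2) := by rw [div_eq_mul_inv]
  have hβnonneg : (0:ℝ) ≤ ∑ α : Fin m, |β α| := Finset.sum_nonneg fun α _ => abs_nonneg _
  calc ‖(∑ α : Fin m, β α • xhat A D b ε (((α : ℕ) : ℝ) + 1)) - mulVecE A⁻¹ b‖
      = ‖mulVecE (E * A⁻¹) b‖ := by rw [hvec]
    _ ≤ ‖E * A⁻¹‖ * ‖b‖ := norm_mulVecE_le _ _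
    _ ≤ ‖E‖ * ‖A⁻¹‖ * ‖b‖ := by
        gcongr
        exact Matrix.l2_opNorm_mul _ _
    _ ≤ ((∑ α : Fin m, |β α|) * (r ^ (2 * m) / (1 - r ^ 2))) * ‖A⁻¹‖ * ‖b‖ := by
        gcongr
    _ = (∑ α : Fin m, |β α|) * r ^ (2 * m) / (1 - r ^ 2) * ‖A⁻¹‖ * ‖b‖ := by
        rw [mul_div_assoc]
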